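/- If A ∈ ℂ^{N×N} satisfies σ_ε(A) = σ(A) + B(0, ε) for all ε > 0, then A is normal. -/

import Mathlib

open Matrix

lemma schur_exists : ∀ (N : ℕ) (A : Matrix (Fin N) (Fin N) ℂ),
    ∃ U T : Matrix (Fin N) (Fin N) ℂ, U ∈ Matrix.unitaryGroup (Fin N) ℂ ∧
      T.BlockTriangular id ∧ A = U * T * Uᴴ := by
  intro N
  induction N with
  | zero =>
    intro A
    exact ⟨1, A, one_mem _, fun i => i.elim0, by ext i j; exact i.elim0⟩
  | succ n ih =>
    intro A
    -- eigenvector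
    obtain ⟨μ, hμ⟩ := Module.End.exists_eigenvalue (Matrix.toLin' A)
    obtain ⟨v, hv⟩ := hμ.exists_hasEigenvector
    have hveq : A *ᵥ v = μ • v := by
      have := hv.apply_eq_smul
      rwa [Matrix.toLin'_apply] at this
    set E := EuclideanSpace ℂ (Fin (n + 1))
    set ve : E := (WithLp.equiv 2 (Fin (n + 1) → ℂ)).symm v with hve
    have hvne : ve ≠ 0 := by
      simp only [hve, ne_eq, EmbeddingLike.map_eq_zero_iff]
      exact fun h0 => hv.2 (by simpa using congrArg (WithLp.equiv 2 (Fin (n + 1) → ℂ)) h0)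
    have hnv : (0:ℝ) < ‖ve‖ := norm_pos_iff.mpr hvne
    set c : ℂ := (‖ve‖ : ℂ)⁻¹ with hc
    set w : E := c • ve with hw
    have hwnorm : ‖w‖ = 1 := by
      rw [hw, norm_smul, hc]
      simp [norm_inv, hnv.ne', abs_of_pos hnv]
    have hweig : A *ᵥ (fun l => w l) = μ • (fun l => w l) := by
      have hwcoord : (fun l => w l) = c • v := rfl
      rw [hwcoord, Matrix.mulVec_smul, hveq, smul_comm]
    -- orthonormal basis extension
    have hcard : Module.finrank ℂ E = Fintype.card (Fin (n + 1)) := by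
      simp [E]
    have horth : Orthonormal ℂ (Set.restrict {(0 : Fin (n+1))} (fun _ => w)) := by
      rw [orthonormal_iff_ite]
      intro i j
      have : i = j := Subsingleton.elim i j
      subst this
      simp only [if_true, Set.restrict_apply]
      rw [inner_self_eq_norm_sq_to_K (𝕜 := ℂ)]; show ((‖w‖ : ℝ) : ℂ) ^ 2 = 1; rw [hwnorm]
      norm_num
    obtain ⟨b, hb⟩ := horth.exists_orthonormalBasis_extension_of_card_eq hcard
    have hb0 : b 0 = w := hb 0 rfl
    set U₀ : Matrix (Fin (n+1)) (Fin (n+1)) ℂ := Matrix.of fun p q => b q p with hU₀def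
    have hbij : ∀ p q : Fin (n+1), (∑ k, (starRingEnd ℂ) (b p k) * b q k) = if p = q then 1 else 0 := by
      intro p q
      have := (orthonormal_iff_ite (𝕜 := ℂ)).mp b.orthonormal p q
      rw [PiLp.inner_apply] at this
      simpa [RCLike.inner_apply, mul_comm] using this
    have hU₀ : U₀ ∈ Matrix.unitaryGroup (Fin (n+1)) ℂ := by
      rw [Matrix.mem_unitaryGroup_iff']
      ext p q
      simp only [Matrix.mul_apply, Matrix.star_eq_conjTranspose, Matrix.conjTranspose_apply,
        hU₀def, Matrix.of_apply, Matrix.one_apply]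
      simpa using hbij p q
    set M : Matrix (Fin (n+1)) (Fin (n+1)) ℂ := U₀ᴴ * A * U₀ with hMdef
    have hMcol : ∀ p, M p 0 = if p = 0 then μ else 0 := by
      intro p
      have hAU : ∀ k, (A * U₀) k 0 = μ * w k := by
        intro k
        have : (A * U₀) k 0 = (A *ᵥ fun l => w l) k := by
          simp only [Matrix.mul_apply, Matrix.mulVec, dotProduct, hU₀def, Matrix.of_apply,
            hb0]
        rw [this, hweig]
        simp [smul_eq_mul]
      have : M p 0 = ∑ k, (starRingEnd ℂ) (b p k) * (μ * w k) := by
        rw [hMdef, Matrix.mul_assoc, Matrix.mul_apply]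
        congr 1; ext k
        rw [hAU k]
        simp [Matrix.conjTranspose_apply, hU₀def]
      rw [this]
      have : ∑ k, (starRingEnd ℂ) (b p k) * (μ * w k) = μ * ∑ k, (starRingEnd ℂ) (b p k) * (b 0 k) := by
        rw [Finset.mul_sum]
        congr 1; ext k
        rw [hb0]
        ring
      rw [this, hbij p 0]
      by_cases hp : p = 0 <;> simp [hp]
    -- block decomposition
    set A₁ : Matrix (Fin n) (Fin n) ℂ := M.submatrix Fin.succ Fin.succ with hA₁def
    obtain ⟨U₁, T₁, hU₁, hT₁, hA₁⟩ := ih A₁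
    set e : Fin 1 ⊕ Fin n ≃ Fin (n+1) := finSumFinEquiv.trans (finCongr (Nat.add_comm 1 n)) with hedef
    have he1 : ∀ x : Fin 1, e (Sum.inl x) = 0 := by
      intro x
      apply Fin.ext
      simp [hedef, Fin.val_eq_zero x]
    have he2 : ∀ j : Fin n, e (Sum.inr j) = j.succ := by
      intro j
      apply Fin.ext
      simp [hedef, Nat.add_comm 1 j.val]
    set w₁ : Matrix (Fin 1) (Fin n) ℂ := Matrix.of fun _ q => M 0 q.succ with hw₁def
    have hM : M = (Matrix.reindex e e) (Matrix.fromBlocks (Matrix.of fun _ _ => μ) w₁ 0 A₁) := by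
      ext p q
      obtain ⟨i, rfl⟩ : ∃ i, e i = p := ⟨e.symm p, e.apply_symm_apply p⟩
      obtain ⟨j, rfl⟩ : ∃ j, e j = q := ⟨e.symm q, e.apply_symm_apply q⟩
      rw [Matrix.reindex_apply, Matrix.submatrix_apply, Equiv.symm_apply_apply,
        Equiv.symm_apply_apply]
      rcases i with x | i <;> rcases j with y | j
      · simp only [Matrix.fromBlocks_apply₁₁, Matrix.of_apply, he1]
        rw [hMcol]; simp
      · simp only [Matrix.fromBlocks_apply₁₂, hw₁def, Matrix.of_apply, he1, he2]
      · simp only [Matrix.fromBlocks_apply₂₁, Matrix.zero_apply, he1, he2]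
        rw [hMcol]; simp [Fin.succ_ne_zero]
      · simp only [Matrix.fromBlocks_apply₂₂, hA₁def, Matrix.submatrix_apply, he2]
    have hre_mul : ∀ X Y : Matrix (Fin 1 ⊕ Fin n) (Fin 1 ⊕ Fin n) ℂ,
        (Matrix.reindex e e) X * (Matrix.reindex e e) Y = (Matrix.reindex e e) (X * Y) := by
      intro X Y
      simp only [Matrix.reindex_apply]
      exact Matrix.submatrix_mul_equiv X Y _ e.symm _
    have hre_one : (Matrix.reindex e e) (1 : Matrix (Fin 1 ⊕ Fin n) (Fin 1 ⊕ Fin n) ℂ) = 1 := by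
      simp [Matrix.reindex_apply]
    set Uh : Matrix (Fin (n+1)) (Fin (n+1)) ℂ :=
      (Matrix.reindex e e) (Matrix.fromBlocks 1 0 0 U₁) with hUhdef
    have hU₁' := Matrix.mem_unitaryGroup_iff'.mp hU₁
    have hU₁'' := Matrix.mem_unitaryGroup_iff.mp hU₁
    have hUh : Uh ∈ Matrix.unitaryGroup (Fin (n+1)) ℂ := by
      rw [Matrix.mem_unitaryGroup_iff']
      rw [hUhdef, Matrix.star_eq_conjTranspose, Matrix.conjTranspose_reindex, hre_mul,
        Matrix.fromBlocks_conjTranspose, Matrix.fromBlocks_multiply]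
      have h11 : U₁ᴴ * U₁ = 1 := by simpa [Matrix.star_eq_conjTranspose] using hU₁'
      simp [h11, Matrix.fromBlocks_one, hre_one]
    set T : Matrix (Fin (n+1)) (Fin (n+1)) ℂ :=
      (Matrix.reindex e e) (Matrix.fromBlocks (Matrix.of fun _ _ => μ) (w₁ * U₁) 0 T₁) with hTdef
    have hTtri : T.BlockTriangular id := by
      rw [hTdef, Matrix.blockTriangular_reindex_iff]
      rintro (x | i) (y | j) hlt
      · obtain rfl : x = y := Subsingleton.elim x y
        exact absurd rfl hlt.ne
      · exact absurd hlt (by simp [Function.comp, he1, he2, Fin.le_def])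
      · rfl
      · refine hT₁ ?_
        have : (j.succ : Fin (n+1)) < i.succ := by
          simpa [Function.comp, he2] using hlt
        exact Fin.succ_lt_succ_iff.mp this
    have hMT : M = Uh * T * Uhᴴ := by
      have hU1c : U₁ * U₁ᴴ = 1 := by simpa [Matrix.star_eq_conjTranspose] using hU₁''
      have hA₁' : U₁ * (T₁ * U₁ᴴ) = A₁ := by rw [← Matrix.mul_assoc, ← hA₁]
      rw [hUhdef, hTdef, Matrix.conjTranspose_reindex, hre_mul, hre_mul,
        Matrix.fromBlocks_conjTranspose, hM]
      congr 1
      rw [Matrix.fromBlocks_multiply, Matrix.fromBlocks_multiply]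
      simp [Matrix.mul_assoc, hU1c, hA₁']
    have hU₀' := Matrix.mem_unitaryGroup_iff'.mp hU₀
    have hU₀'' := Matrix.mem_unitaryGroup_iff.mp hU₀
    refine ⟨U₀ * Uh, T, mul_mem hU₀ hUh, hTtri, ?_⟩
    have hAM : A = U₀ * M * U₀ᴴ := by
      rw [hMdef]
      rw [Matrix.mul_assoc, Matrix.mul_assoc, Matrix.mul_assoc]
      rw [show U₀ * U₀ᴴ = 1 by simpa [Matrix.star_eq_conjTranspose] using hU₀'']
      rw [Matrix.mul_one, ← Matrix.mul_assoc U₀ U₀ᴴ, 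
        show U₀ * U₀ᴴ = 1 by simpa [Matrix.star_eq_conjTranspose] using hU₀'', Matrix.one_mul]
    rw [hAM, hMT, Matrix.conjTranspose_mul]
    noncomm_ring

/-- The operator norm of a matrix, induced by the Euclidean norm. -/
noncomputable def opNorm {n : Type*} [Fintype n] [DecidableEq n]
    (A : Matrix n n ℂ) : ℝ :=
  ‖Matrix.toEuclideanCLM (𝕜 := ℂ) A‖

lemma unitary_isometry {n : Type*} [Fintype n] [DecidableEq n]
    {V : Matrix n n ℂ} (hV : V ∈ Matrix.unitaryGroup n ℂ)
    (x : EuclideanSpace ℂ n) :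
    ‖Matrix.toEuclideanCLM (𝕜 := ℂ) V x‖ = ‖x‖ := by
  set π := Matrix.toEuclideanCLM (𝕜 := ℂ) (n := n)
  have h1 : star (π V) * π V = 1 := by
    rw [← map_star, ← _root_.map_mul, (Unitary.mem_iff.mp hV).1, _root_.map_one]
  have h2 : (ContinuousLinearMap.adjoint (π V)) (π V x) = x := by
    have := congrArg (fun f => f x) h1
    simpa [ContinuousLinearMap.star_eq_adjoint, ContinuousLinearMap.mul_apply] using this
  have h3 : (inner ℂ (π V x) (π V x) : ℂ) = inner ℂ x x := by
    rw [← ContinuousLinearMap.adjoint_inner_left (π V) x (π V x), h2]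
  rw [inner_self_eq_norm_sq_to_K (𝕜 := ℂ), inner_self_eq_norm_sq_to_K (𝕜 := ℂ)] at h3
  have h4 : ‖π V x‖ ^ 2 = ‖x‖ ^ 2 := by exact_mod_cast h3
  have := congrArg Real.sqrt h4
  simpa [Real.sqrt_sq, norm_nonneg] using this

set_option maxHeartbeats 1600000

theorem normal_of_pseudospectrum_eq_union_of_balls {N : ℕ}
    (A : Matrix (Fin N) (Fin N) ℂ)
    (h : ∀ ε : ℝ, 0 < ε →
      {z : ℂ | ¬ IsUnit (z • (1 : Matrix (Fin N) (Fin N) ℂ) - A) ∨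
          opNorm ((z • (1 : Matrix (Fin N) (Fin N) ℂ) - A)⁻¹) > 1 / ε} =
        {z : ℂ | ∃ μ ∈ spectrum ℂ A, dist z μ < ε}) :
    A * Aᴴ = Aᴴ * A := by
  obtain ⟨U, T, hU, hT, hA⟩ := schur_exists N A
  have hU1 : Uᴴ * U = 1 := by
    simpa [Matrix.star_eq_conjTranspose] using (Unitary.mem_iff.mp hU).1
  have hU2 : U * Uᴴ = 1 := by
    simpa [Matrix.star_eq_conjTranspose] using (Unitary.mem_iff.mp hU).2
  have hUunit : IsUnit U := ⟨⟨U, Uᴴ, hU2, hU1⟩, rfl⟩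
  have hUHunit : IsUnit Uᴴ := ⟨⟨Uᴴ, U, hU1, hU2⟩, rfl⟩
  -- conjugation identity
  have hconj : ∀ c : ℂ, c • (1 : Matrix (Fin N) (Fin N) ℂ) - A = U * (c • 1 - T) * Uᴴ := by
    intro c
    rw [hA, Matrix.mul_sub, Matrix.sub_mul]
    congr 2
    rw [Matrix.mul_smul, Matrix.mul_one, Matrix.smul_mul, hU2]
  -- spectrum is contained in the diagonal of T
  have hspec : ∀ μ ∈ spectrum ℂ A, ∃ k, μ = T k k := by
    intro μ hμ
    rw [spectrum.mem_iff] at hμ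
    by_contra hk
    push_neg at hk
    apply hμ
    have htri : (μ • (1 : Matrix (Fin N) (Fin N) ℂ) - T).BlockTriangular id := by
      intro p q hpq
      have hpq' : q < p := hpq
      simp [Matrix.sub_apply, Matrix.smul_apply, Matrix.one_apply_ne (ne_of_gt hpq'),
        hT hpq]
    have hdet : (μ • (1 : Matrix (Fin N) (Fin N) ℂ) - T).det ≠ 0 := by
      rw [Matrix.det_of_upperTriangular htri, Finset.prod_ne_zero_iff]
      intro k _
      simp only [Matrix.sub_apply, Matrix.smul_apply, Matrix.one_apply_eq, smul_eq_mul, mul_one]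
      exact sub_ne_zero.mpr (hk k)
    have hunit : IsUnit (μ • (1 : Matrix (Fin N) (Fin N) ℂ) - T) :=
      (Matrix.isUnit_iff_isUnit_det _).mpr (isUnit_iff_ne_zero.mpr hdet)
    rw [Algebra.algebraMap_eq_smul_one, hconj μ]
    exact (hUunit.mul hunit).mul hUHunit
  -- key step: T is diagonal
  have hdiag : ∀ i j : Fin N, i ≠ j → T i j = 0 := by
    by_contra hcon
    push_neg at hcon
    obtain ⟨i0, j0, hne, hT0⟩ := hcon
    classical
    set S : Finset (Fin N × Fin N) :=
      Finset.univ.filter (fun pq => pq.1 < pq.2 ∧ T pq.1 pq.2 ≠ 0) with hS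
    have hSne : S.Nonempty := by
      rcases lt_or_gt_of_ne hne with hlt | hgt
      · exact ⟨(i0, j0), by simp [hS, hlt, hT0]⟩
      · exact absurd (hT hgt) hT0
    obtain ⟨⟨i, j⟩, hijS, hmin⟩ :=
      Finset.exists_min_image S (fun pq => pq.2.val - pq.1.val) hSne
    rw [hS, Finset.mem_filter] at hijS
    obtain ⟨-, hij, hTij⟩ := hijS
    set lam : ℂ := T j j with hlam
    -- choice of the scale s and point z
    set f : Fin N → ℝ := fun k => if T k k = lam then 2 else ‖T k k - lam‖ with hf
    have hfpos : ∀ k, 0 < f k := by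
      intro k
      rw [hf]
      by_cases hk : T k k = lam
      · simp [hk]
      · simp only [if_neg hk]
        exact norm_pos_iff.mpr (sub_ne_zero.mpr hk)
    set s : ℝ := (Finset.univ.inf' ⟨j, Finset.mem_univ j⟩ f) / 2 with hs'
    have hs : 0 < s := by
      have : 0 < Finset.univ.inf' ⟨j, Finset.mem_univ j⟩ f := by
        refine (Finset.lt_inf'_iff _).2 ?_
        intro k _
        exact hfpos k
      positivity
    have hsf : ∀ k, 2 * s ≤ f k := by
      intro k
      have := Finset.inf'_le f (Finset.mem_univ k)
      rw [hs']
      linarith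
    set z : ℂ := lam + (s : ℂ) with hz
    have hzlam : z - lam = (s : ℂ) := by rw [hz]; ring
    have hzk : ∀ k, s ≤ ‖z - T k k‖ := by
      intro k
      by_cases hk : T k k = lam
      · rw [hk, hzlam]
        simp [abs_of_pos hs]
      · have h1 : ‖lam - T k k‖ ≤ ‖z - T k k‖ + ‖z - lam‖ := by
          have heq : lam - T k k = (z - T k k) - (z - lam) := by ring
          rw [heq]
          exact norm_sub_le _ _
        have h2 : 2 * s ≤ ‖T k k - lam‖ := by have := hsf k; simp only [hf, if_neg hk] at this; exact this
        have h2' : ‖T k k - lam‖ = ‖lam - T k k‖ := norm_sub_rev _ _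
        have h3 : ‖z - lam‖ = s := by rw [hzlam]; simp [abs_of_pos hs]
        linarith
    -- z is not in the pseudospectrum ball set
    have hznot : z ∉ {z : ℂ | ∃ μ ∈ spectrum ℂ A, dist z μ < s} := by
      rintro ⟨μ, hμ, hd⟩
      obtain ⟨k, rfl⟩ := hspec μ hμ
      rw [Complex.dist_eq] at hd
      have := hzk k
      linarith
    rw [← h s hs] at hznot
    simp only [Set.mem_setOf_eq, not_or, not_not, not_lt] at hznot
    obtain ⟨hUnit, hnle⟩ := hznot
    -- transfer to the triangular matrix
    set R := (z • (1 : Matrix (Fin N) (Fin N) ℂ) - A)⁻¹ with hR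
    set Mz := z • (1 : Matrix (Fin N) (Fin N) ℂ) - T with hMz
    have hzA : z • (1 : Matrix (Fin N) (Fin N) ℂ) - A = U * Mz * Uᴴ := hconj z
    have hdetA : IsUnit (z • (1 : Matrix (Fin N) (Fin N) ℂ) - A).det :=
      (Matrix.isUnit_iff_isUnit_det _).mp hUnit
    have hRl : R * (z • (1 : Matrix (Fin N) (Fin N) ℂ) - A) = 1 := Matrix.nonsing_inv_mul _ hdetA
    have hRr : (z • (1 : Matrix (Fin N) (Fin N) ℂ) - A) * R = 1 := Matrix.mul_nonsing_inv _ hdetA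
    set B := Uᴴ * R * U with hB
    have hUMz : U * Mz = (z • (1 : Matrix (Fin N) (Fin N) ℂ) - A) * U := by
      rw [hzA, Matrix.mul_assoc, Matrix.mul_assoc, hU1, Matrix.mul_one]
    have hMzU : Mz * Uᴴ = Uᴴ * (z • (1 : Matrix (Fin N) (Fin N) ℂ) - A) := by
      rw [hzA, ← Matrix.mul_assoc, ← Matrix.mul_assoc, hU1, Matrix.one_mul]
    have hBl : B * Mz = 1 := by
      rw [hB, Matrix.mul_assoc (Uᴴ * R) U Mz, hUMz, Matrix.mul_assoc Uᴴ R _,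
        ← Matrix.mul_assoc R _ U, hRl, Matrix.one_mul, hU1]
    have hBr : Mz * B = 1 := by
      rw [hB, ← Matrix.mul_assoc Mz (Uᴴ * R) U, ← Matrix.mul_assoc Mz Uᴴ R, hMzU,
        Matrix.mul_assoc Uᴴ _ R, hRr, Matrix.mul_one, hU1]
    have hMzUnit : IsUnit Mz := ⟨⟨Mz, B, hBr, hBl⟩, rfl⟩
    have hMzdet : IsUnit Mz.det := (Matrix.isUnit_iff_isUnit_det _).mp hMzUnit
    have hBinv : Mz⁻¹ = B := Matrix.inv_eq_right_inv hBr
    have hMztri : Mz.BlockTriangular id := by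
      intro p q hpq
      have hpq' : q < p := hpq
      simp [hMz, Matrix.sub_apply, Matrix.smul_apply,
        Matrix.one_apply_ne (ne_of_gt hpq'), hT hpq]
    have hBtri : B.BlockTriangular id := by
      haveI := Mz.invertibleOfIsUnitDet hMzdet
      rw [← hBinv]
      exact Matrix.blockTriangular_inv_of_blockTriangular hMztri
    have hMzd : ∀ p, Mz p p = z - T p p := by
      intro p; simp [hMz, Matrix.sub_apply, Matrix.smul_apply]
    have hMzo : ∀ p q, p ≠ q → Mz p q = - T p q := by
      intro p q hpq
      simp [hMz, Matrix.sub_apply, Matrix.smul_apply, Matrix.one_apply_ne hpq]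
    have hBdiag : ∀ p, B p p * (z - T p p) = 1 := by
      intro p
      have h1 := congrArg (fun X => X p p) hBl
      simp only [Matrix.mul_apply, Matrix.one_apply_eq] at h1
      have h2 : ∑ k, B p k * Mz k p = B p p * Mz p p := by
        apply Finset.sum_eq_single p
        · intro k _ hk
          rcases lt_or_gt_of_ne hk with hlt | hgt
          · rw [hBtri hlt, zero_mul]
          · rw [hMztri hgt, mul_zero]
        · intro hp; exact absurd (Finset.mem_univ p) hp
      rw [h2, hMzd] at h1
      exact h1
    have hij' : i ≠ j := ne_of_lt hij
    have hkey : B i j * (z - T j j) = B i i * T i j := by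
      have h1 := congrArg (fun X => X i j) hBl
      simp only [Matrix.mul_apply, Matrix.one_apply_ne hij'] at h1
      have h2 : ∑ k, B i k * Mz k j = B i i * Mz i j + B i j * Mz j j := by
        have hpair : ∑ k ∈ ({i, j} : Finset (Fin N)), B i k * Mz k j
            = B i i * Mz i j + B i j * Mz j j := Finset.sum_pair hij'
        rw [← hpair]
        refine (Finset.sum_subset (Finset.subset_univ _) ?_).symm
        intro k _ hk
        simp only [Finset.mem_insert, Finset.mem_singleton, not_or] at hk
        obtain ⟨hki, hkj⟩ := hk
        rcases lt_or_gt_of_ne hki with hlt | hgt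
        · rw [hBtri hlt, zero_mul]
        · rcases lt_or_gt_of_ne hkj with hlt2 | hgt2
          · have hTkj : T k j = 0 := by
              by_contra hTkj
              have hmem : (k, j) ∈ S := by simp [hS, hlt2, hTkj]
              have hm := hmin (k, j) hmem
              simp only at hm
              have hik : (i : ℕ) < (k : ℕ) := hgt
              have hkj2 : (k : ℕ) < (j : ℕ) := hlt2
              omega
            rw [hMzo k j (ne_of_lt hlt2), hTkj, neg_zero, mul_zero]
          · rw [hMztri hgt2, mul_zero]
      rw [h2, hMzo i j hij', hMzd j] at h1
      linear_combination h1
    have hBii : B i i ≠ 0 := left_ne_zero_of_mul_eq_one (hBdiag i)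
    have hzTjj : z - T j j = (s : ℂ) := by rw [← hlam, hzlam]
    have hBijne : B i j ≠ 0 := by
      intro h0
      rw [h0, zero_mul] at hkey
      exact (mul_ne_zero hBii hTij) hkey.symm
    have hBjj1 : B j j * (s : ℂ) = 1 := by rw [← hzTjj]; exact hBdiag j
    have hBjjnorm : ‖B j j‖ = 1 / s := by
      have h1 := congrArg (fun x : ℂ => ‖x‖) hBjj1
      simp only [norm_mul, norm_one] at h1
      have h2 : ‖((s : ℝ) : ℂ)‖ = s := by
        rw [Complex.norm_real]
        exact abs_of_pos hs
      rw [h2] at h1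
      rw [eq_div_iff hs.ne']
      exact h1
    -- the norm contradiction
    set π := Matrix.toEuclideanCLM (𝕜 := ℂ) (n := Fin N) with hπ
    set x : EuclideanSpace ℂ (Fin N) := EuclideanSpace.single j (1 : ℂ) with hx
    set y : EuclideanSpace ℂ (Fin N) := π B x with hy
    have hyk : ∀ k, y k = B k j := by
      have h1 : (WithLp.equiv 2 (Fin N → ℂ)) y = Matrix.toLin' B ((WithLp.equiv 2 (Fin N → ℂ)) x) :=
        Matrix.ofLp_toEuclideanCLM B x
      rw [hx] at h1
      intro k
      have h2 : y k = ((WithLp.equiv 2 (Fin N → ℂ)) y) k := rfl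
      rw [h2, h1]
      simp [Matrix.mulVec, dotProduct, EuclideanSpace.single_apply, Pi.single_apply]
    have hxnorm : ‖x‖ = 1 := by rw [hx, EuclideanSpace.norm_single, norm_one]
    have hUHmem : Uᴴ ∈ Matrix.unitaryGroup (Fin N) ℂ := by
      have := Unitary.star_mem hU
      rwa [Matrix.star_eq_conjTranspose] at this
    have hynorm : ‖y‖ ≤ 1 / s := by
      have hπB : π B = π Uᴴ * (π R * π U) := by
        rw [hB, _root_.map_mul, _root_.map_mul, mul_assoc]
      have h1 : y = (π Uᴴ) ((π R) ((π U) x)) := by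
        rw [hy, hπB]; rfl
      rw [h1, unitary_isometry hUHmem]
      calc ‖(π R) ((π U) x)‖ ≤ ‖π R‖ * ‖(π U) x‖ := ContinuousLinearMap.le_opNorm _ _
        _ = opNorm (z • (1 : Matrix (Fin N) (Fin N) ℂ) - A)⁻¹ := by
            rw [unitary_isometry hU, hxnorm, mul_one]; rfl
        _ ≤ 1 / s := hnle
    have hysq : ‖y‖ ^ 2 = ∑ k, ‖y k‖ ^ 2 := by
      have h0 : ‖y‖ = Real.sqrt (∑ k, ‖y k‖ ^ 2) := EuclideanSpace.norm_eq y
      rw [h0]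
      exact Real.sq_sqrt (Finset.sum_nonneg fun k _ => sq_nonneg _)
    have hge : ‖y i‖ ^ 2 + ‖y j‖ ^ 2 ≤ ∑ k, ‖y k‖ ^ 2 := by
      have hpair2 : ∑ k ∈ ({i, j} : Finset (Fin N)), ‖y k‖ ^ 2
          = ‖y i‖ ^ 2 + ‖y j‖ ^ 2 := Finset.sum_pair hij'
      rw [← hpair2]
      refine Finset.sum_le_sum_of_subset_of_nonneg (Finset.subset_univ _) ?_
      intro k _ _
      positivity
    have hyi : 0 < ‖y i‖ := by rw [hyk i]; exact norm_pos_iff.mpr hBijne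
    have hyj : ‖y j‖ = 1 / s := by rw [hyk j]; exact hBjjnorm
    have hyi2 : 0 < ‖y i‖ ^ 2 := by positivity
    have h1s : (0:ℝ) < 1 / s := by positivity
    have hy2 : ‖y‖ ^ 2 ≤ (1 / s) ^ 2 := by nlinarith [norm_nonneg y]
    rw [hyj] at hge
    linarith [hge, hy2, hysq]
  -- conclude normality
  have hTd : T = Matrix.diagonal (fun k => T k k) := by
    ext p q
    by_cases hpq : p = q
    · subst hpq; simp
    · simp [Matrix.diagonal_apply_ne _ hpq, hdiag p q hpq]
  have hcomm : T * Tᴴ = Tᴴ * T := by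
    rw [hTd, Matrix.diagonal_conjTranspose, Matrix.diagonal_mul_diagonal,
      Matrix.diagonal_mul_diagonal]
    -- (diagonal matrices commute)
    funext k
    simp [mul_comm]
  have cancel1 : ∀ X : Matrix (Fin N) (Fin N) ℂ, Uᴴ * (U * X) = X := by
    intro X; rw [← Matrix.mul_assoc, hU1, Matrix.one_mul]
  rw [hA]
  simp only [Matrix.conjTranspose_mul, Matrix.conjTranspose_conjTranspose, Matrix.mul_assoc,
    cancel1]
  have : T * (Tᴴ * Uᴴ) = Tᴴ * (T * Uᴴ) := by
    rw [← Matrix.mul_assoc, ← Matrix.mul_assoc, hcomm]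
  rw [this]
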